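/- Let G = ([n],E) have maximum degree Δ and let q ≥ 3Δ. For the uniform distribution π over proper q-colorings of G, for any S ⊆ [n] and proper partial colorings C¹, C² of S (each extendable to proper colorings), π(x_S = C¹)/π(x_S = C²) ≤ q^{(Δ+1)|S|}. -/

import Mathlib

open Finset

lemma stmt17_recolor {n Δ q : ℕ} (G : SimpleGraph (Fin n)) [DecidableRel G.Adj]
    (hdeg : ∀ v, G.degree v ≤ Δ) (hq : 3 * Δ ≤ q) (S : Finset (Fin n))
    (C2 : Fin n → Fin q)
    (hC2p : ∀ i j, G.Adj i j → i ∈ S → j ∈ S → C2 i ≠ C2 j)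
    (C : Fin n → Fin q) (hC : ∀ i j, G.Adj i j → C i ≠ C j) :
    ∃ C' : Fin n → Fin q, (∀ i j, G.Adj i j → C' i ≠ C' j) ∧
      (∀ i ∈ S, C' i = C2 i) ∧
      (∀ i, i ∉ S ∪ S.biUnion (fun s => G.neighborFinset s) → C' i = C i) := by
  set T := S ∪ S.biUnion (fun s => G.neighborFinset s) with hT
  have key : ∀ k (R : Finset (Fin n)), R ⊆ T \ S → ((T \ S) \ R).card ≤ k →
      ∃ C' : Fin n → Fin q,
        (∀ i j, G.Adj i j → i ∉ R → j ∉ R → C' i ≠ C' j) ∧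
        (∀ i ∈ S, C' i = C2 i) ∧ (∀ i, i ∉ T → C' i = C i) := by
    intro k
    induction k with
    | zero =>
      intro R hR hcard
      have hempty : (T \ S) \ R = ∅ := Finset.card_eq_zero.mp (Nat.le_zero.mp hcard)
      have hReq : R = T \ S :=
        Finset.Subset.antisymm hR (Finset.sdiff_eq_empty_iff_subset.mp hempty)
      refine ⟨fun i => if i ∈ S then C2 i else C i, ?_, ?_, ?_⟩
      · intro i j hadj hiR hjR
        rw [hReq] at hiR hjR
        by_cases hiS : i ∈ S <;> by_cases hjS : j ∈ S <;> simp only [hiS, hjS, if_pos, if_neg,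
          if_true, if_false]
        · exact hC2p i j hadj hiS hjS
        · -- i ∈ S, j ∉ S: then j ∈ T, so j ∈ T \ S, contradiction
          exfalso
          apply hjR
          rw [Finset.mem_sdiff]
          refine ⟨?_, hjS⟩
          rw [hT, Finset.mem_union]
          right
          exact Finset.mem_biUnion.mpr ⟨i, hiS, (SimpleGraph.mem_neighborFinset G i j).mpr hadj⟩
        · exfalso
          apply hiR
          rw [Finset.mem_sdiff]
          refine ⟨?_, hiS⟩
          rw [hT, Finset.mem_union]
          right
          exact Finset.mem_biUnion.mpr ⟨j, hjS,
            (SimpleGraph.mem_neighborFinset G j i).mpr hadj.symm⟩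
        · exact hC i j hadj
      · intro i hi; simp [hi]
      · intro i hi
        have hiS : i ∉ S := fun h => hi (by rw [hT]; exact Finset.mem_union_left _ h)
        simp [hiS]
    | succ k ih =>
      intro R hR hcard
      by_cases hle : ((T \ S) \ R).card ≤ k
      · exact ih R hR hle
      · have hpos : 0 < ((T \ S) \ R).card := by omega
        obtain ⟨v, hv⟩ := Finset.card_pos.mp hpos
        rw [Finset.mem_sdiff] at hv
        obtain ⟨hvTS, hvR⟩ := hv
        have hvT : v ∈ T := (Finset.mem_sdiff.mp hvTS).1
        have hvS : v ∉ S := (Finset.mem_sdiff.mp hvTS).2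
        -- v has a neighbor
        have hdegv : 1 ≤ G.degree v := by
          have : v ∈ S.biUnion (fun s => G.neighborFinset s) := by
            rcases Finset.mem_union.mp hvT with h | h
            · exact absurd h hvS
            · exact h
          obtain ⟨s, hsS, hsv⟩ := Finset.mem_biUnion.mp this
          have : s ∈ G.neighborFinset v :=
            (SimpleGraph.mem_neighborFinset G v s).mpr
              ((SimpleGraph.mem_neighborFinset G s v).mp hsv).symm
          have := Finset.card_pos.mpr ⟨s, this⟩
          rwa [SimpleGraph.card_neighborFinset_eq_degree] at this
        have hΔ1 : 1 ≤ Δ := le_trans hdegv (hdeg v)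
        have hqΔ : Δ + 1 ≤ q := by omega
        obtain ⟨C', hC'p, hC'S, hC'T⟩ := ih (insert v R)
          (Finset.insert_subset hvTS hR)
          (by
            have : (T \ S) \ insert v R = ((T \ S) \ R).erase v := by
              ext x
              simp [Finset.mem_sdiff, Finset.mem_erase, Finset.mem_insert]
              tauto
            rw [this, Finset.card_erase_of_mem (Finset.mem_sdiff.mpr ⟨hvTS, hvR⟩)]
            omega)
        -- choose a color for v
        have hcardim : ((G.neighborFinset v).image C').card < q := by
          calc ((G.neighborFinset v).image C').card ≤ (G.neighborFinset v).card :=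
                Finset.card_image_le
            _ = G.degree v := G.card_neighborFinset_eq_degree v
            _ ≤ Δ := hdeg v
            _ < q := by omega
        have hne : (((G.neighborFinset v).image C')ᶜ).Nonempty := by
          rw [← Finset.card_pos, Finset.card_compl]
          simp only [Fintype.card_fin]
          omega
        obtain ⟨c, hc⟩ := hne
        rw [Finset.mem_compl] at hc
        refine ⟨Function.update C' v c, ?_, ?_, ?_⟩
        · intro i j hadj hiR hjR
          by_cases hiv : i = v
          · subst hiv
            have hjv : j ≠ i := fun h => G.loopless.irrefl i (h ▸ hadj)
            rw [Function.update_self, Function.update_of_ne hjv]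
            intro hcontra
            exact hc (Finset.mem_image.mpr ⟨j, (SimpleGraph.mem_neighborFinset G i j).mpr hadj,
              hcontra.symm⟩)
          · by_cases hjv : j = v
            · subst hjv
              rw [Function.update_self, Function.update_of_ne hiv]
              intro hcontra
              exact hc (Finset.mem_image.mpr ⟨i,
                (SimpleGraph.mem_neighborFinset G j i).mpr hadj.symm, hcontra⟩)
            · rw [Function.update_of_ne hiv, Function.update_of_ne hjv]
              exact hC'p i j hadj (by simp [Finset.mem_insert, hiv, hiR])
                (by simp [Finset.mem_insert, hjv, hjR])
        · intro i hi
          have : i ≠ v := fun h => hvS (h ▸ hi)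
          rw [Function.update_of_ne this]
          exact hC'S i hi
        · intro i hi
          have : i ≠ v := fun h => hi (h ▸ hvT)
          rw [Function.update_of_ne this]
          exact hC'T i hi
  obtain ⟨C', h1, h2, h3⟩ := key (T \ S).card ∅ (Finset.empty_subset _) (by simp)
  exact ⟨C', fun i j hadj => h1 i j hadj (Finset.notMem_empty i) (Finset.notMem_empty j),
    h2, h3⟩

/-- for the uniform distribution over proper `q`-colorings of a
graph of maximum degree `Δ` with `q ≥ 3Δ`, and any two extendable partial
colorings `C¹, C²` of a set `S`,
`π(x_S = C¹)/π(x_S = C²) ≤ q^{(Δ+1)|S|}`. -/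
theorem stmt17 {n Δ q : ℕ} (G : SimpleGraph (Fin n)) [DecidableRel G.Adj]
    (hdeg : ∀ v, G.degree v ≤ Δ) (hq : 3 * Δ ≤ q)
    (S : Finset (Fin n)) (C1 C2 : Fin n → Fin q)
    (hC1 : ∃ D : Fin n → Fin q, (∀ i j, G.Adj i j → D i ≠ D j) ∧ ∀ i ∈ S, D i = C1 i)
    (hC2 : ∃ D : Fin n → Fin q, (∀ i j, G.Adj i j → D i ≠ D j) ∧ ∀ i ∈ S, D i = C2 i) :
    ((Finset.univ.filter (fun C : Fin n → Fin q =>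
        (∀ i j, G.Adj i j → C i ≠ C j) ∧ ∀ i ∈ S, C i = C1 i)).card : ℝ)
      / ((Finset.univ.filter (fun C : Fin n → Fin q =>
        (∀ i j, G.Adj i j → C i ≠ C j) ∧ ∀ i ∈ S, C i = C2 i)).card : ℝ)
      ≤ (q : ℝ) ^ ((Δ + 1) * S.card) := by
  classical
  obtain ⟨D2, hD2p, hD2S⟩ := hC2
  set A1 := Finset.univ.filter (fun C : Fin n → Fin q =>
      (∀ i j, G.Adj i j → C i ≠ C j) ∧ ∀ i ∈ S, C i = C1 i) with hA1
  set A2 := Finset.univ.filter (fun C : Fin n → Fin q =>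
      (∀ i j, G.Adj i j → C i ≠ C j) ∧ ∀ i ∈ S, C i = C2 i) with hA2
  have hA2pos : 0 < A2.card :=
    Finset.card_pos.mpr ⟨D2, Finset.mem_filter.mpr ⟨Finset.mem_univ _, hD2p, hD2S⟩⟩
  by_cases hq0 : q = 0
  · subst hq0
    have hn : n = 0 := by
      by_contra h
      exact (D2 ⟨0, Nat.pos_of_ne_zero h⟩).elim0
    subst hn
    have hS : S = ∅ := Finset.eq_empty_of_isEmpty S
    have hA1u : A1 = Finset.univ := by
      apply Finset.filter_true_of_mem
      intro C _
      exact ⟨fun i => i.elim0, fun i => i.elim0⟩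
    have hA2u : A2 = Finset.univ := by
      apply Finset.filter_true_of_mem
      intro C _
      exact ⟨fun i => i.elim0, fun i => i.elim0⟩
    rw [hA1u, hA2u, hS]
    simp
  · have hq1 : 1 ≤ q := Nat.pos_of_ne_zero hq0
    set T := S ∪ S.biUnion (fun s => G.neighborFinset s) with hT
    have hTcard : T.card ≤ (Δ + 1) * S.card := by
      calc T.card ≤ S.card + (S.biUnion (fun s => G.neighborFinset s)).card :=
            Finset.card_union_le _ _
        _ ≤ S.card + ∑ s ∈ S, (G.neighborFinset s).card := by
            exact Nat.add_le_add_left (Finset.card_biUnion_le) _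
        _ ≤ S.card + ∑ s ∈ S, Δ := by
            gcongr with s hs
            rw [G.card_neighborFinset_eq_degree]
            exact hdeg s
        _ = S.card + S.card * Δ := by rw [Finset.sum_const, smul_eq_mul]
        _ = (Δ + 1) * S.card := by ring
    have hC2p : ∀ i j, G.Adj i j → i ∈ S → j ∈ S → C2 i ≠ C2 j := by
      intro i j hadj hi hj
      rw [← hD2S i hi, ← hD2S j hj]
      exact hD2p i j hadj
    have hrec : ∀ C : Fin n → Fin q, (∀ i j, G.Adj i j → C i ≠ C j) →
        ∃ C' : Fin n → Fin q, (∀ i j, G.Adj i j → C' i ≠ C' j) ∧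
          (∀ i ∈ S, C' i = C2 i) ∧ (∀ i, i ∉ T → C' i = C i) :=
      fun C hCp => stmt17_recolor G hdeg hq S C2 hC2p C hCp
    let φ : (Fin n → Fin q) → (Fin n → Fin q) := fun C =>
      if h : ∀ i j, G.Adj i j → C i ≠ C j then (hrec C h).choose else C
    have hφspec : ∀ C (h : ∀ i j, G.Adj i j → C i ≠ C j),
        (∀ i j, G.Adj i j → φ C i ≠ φ C j) ∧
          (∀ i ∈ S, φ C i = C2 i) ∧ (∀ i, i ∉ T → φ C i = C i) := by
      intro C h
      simp only [φ, dif_pos h]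
      exact (hrec C h).choose_spec
    have hkey : A1.card ≤ q ^ ((Δ + 1) * S.card) * A2.card := by
      have hinj : A1.card ≤ (A2 ×ˢ (Finset.univ : Finset (↥T → Fin q))).card := by
        apply Finset.card_le_card_of_injOn (fun C => (φ C, fun i : ↥T => C i))
        · intro C hCmem
          obtain ⟨-, hCp, hCS⟩ := Finset.mem_filter.mp hCmem
          obtain ⟨h1, h2, h3⟩ := hφspec C hCp
          exact Finset.mem_product.mpr
            ⟨Finset.mem_filter.mpr ⟨Finset.mem_univ _, h1, h2⟩, Finset.mem_univ _⟩
        · intro C hCmem C' hC'mem heq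
          obtain ⟨-, hCp, hCS⟩ := Finset.mem_filter.mp hCmem
          obtain ⟨-, hC'p, hC'S⟩ := Finset.mem_filter.mp hC'mem
          have heq1 : φ C = φ C' := congrArg Prod.fst heq
          have heq2 : ∀ i : ↥T, C i = C' i := fun i =>
            congrFun (congrArg Prod.snd heq) i
          funext i
          by_cases hiT : i ∈ T
          · exact heq2 ⟨i, hiT⟩
          · rw [← (hφspec C hCp).2.2 i hiT, heq1, (hφspec C' hC'p).2.2 i hiT]
      have hcards : (A2 ×ˢ (Finset.univ : Finset (↥T → Fin q))).card
          = A2.card * q ^ T.card := by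
        rw [Finset.card_product, Finset.card_univ, Fintype.card_fun,
          Fintype.card_fin, Fintype.card_coe]
      calc A1.card ≤ A2.card * q ^ T.card := by rw [← hcards]; exact hinj
        _ ≤ A2.card * q ^ ((Δ + 1) * S.card) := by
            exact Nat.mul_le_mul_left _ (Nat.pow_le_pow_right hq1 hTcard)
        _ = q ^ ((Δ + 1) * S.card) * A2.card := Nat.mul_comm _ _
    have hA2pos' : (0 : ℝ) < (A2.card : ℝ) := by exact_mod_cast hA2pos
    rw [div_le_iff₀ hA2pos']
    calc (A1.card : ℝ) ≤ ((q ^ ((Δ + 1) * S.card) * A2.card : ℕ) : ℝ) := by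
          exact_mod_cast hkey
      _ = (q : ℝ) ^ ((Δ + 1) * S.card) * (A2.card : ℝ) := by push_cast; ring
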